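/- Suppose f : ℝ^d × [0,∞) → ℝ^d and g : ℝ^d × [0,∞) → ℝ^{d×m} satisfy 2⟨x, f(x,t)⟩ + |g(x,t)|^2 ≤ C(1+t)^{-K₁} - K₁(1+t)^{-1}|x|^2 for constants C > 0 and K₁ > 1. Let θ ∈ (1/2, 1], 0 < ε < K₁ - 1, and set F(x,t) = x - θΔt·f(x,t). If Δt ≤ (2θ-1)(min(ε,1))/(K₁(K₁-ε)θ²), then for all x ∈ ℝ^d and t ≥ 0: 2⟨x, f(x,t)⟩ + |g(x,t)|^2 + (1-2θ)Δt|f(x,t)|^2 ≤ C(1+t)^{-K₁} - (K₁-ε)(1+t)^{-1}|F(x,t)|^2. -/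
import Mathlib


open scoped RealInnerProductSpace

theorem key_inequality_polynomial (d m : ℕ)
    (f : EuclideanSpace ℝ (Fin d) → ℝ → EuclideanSpace ℝ (Fin d))
    (g : EuclideanSpace ℝ (Fin d) → ℝ → EuclideanSpace ℝ (Fin d × Fin m))
    (C K₁ θ ε Δt : ℝ) (hC : 0 < C) (hK₁ : 1 < K₁)
    (hθ0 : 1/2 < θ) (hθ1 : θ ≤ 1) (hε0 : 0 < ε) (hε1 : ε < K₁ - 1)
    (hΔt0 : 0 < Δt) (hΔt : Δt ≤ (2*θ - 1) * min ε 1 / (K₁ * (K₁ - ε) * θ^2))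
    (hcond : ∀ x : EuclideanSpace ℝ (Fin d), ∀ t : ℝ, 0 ≤ t →
      2 * ⟪x, f x t⟫ + ‖g x t‖ ^ 2 ≤ C * (1+t) ^ (-K₁) - K₁ * (1+t)⁻¹ * ‖x‖ ^ 2)
    (F : EuclideanSpace ℝ (Fin d) → ℝ → EuclideanSpace ℝ (Fin d))
    (hF : ∀ x t, F x t = x - (θ * Δt) • f x t) :
    ∀ x : EuclideanSpace ℝ (Fin d), ∀ t : ℝ, 0 ≤ t →
      2 * ⟪x, f x t⟫ + ‖g x t‖ ^ 2 + (1 - 2*θ) * Δt * ‖f x t‖ ^ 2 ≤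
        C * (1+t) ^ (-K₁) - (K₁ - ε) * (1+t)⁻¹ * ‖F x t‖ ^ 2 := by
  intro x t ht
  have hKε : 0 < K₁ - ε := by linarith
  have hK0 : 0 < K₁ := by linarith
  have hθpos : 0 < θ := by linarith
  have hden : 0 < K₁ * (K₁ - ε) * θ^2 := by positivity
  -- step-size condition, cleaned up
  have hΔt' : K₁ * (K₁ - ε) * θ^2 * Δt ≤ (2*θ - 1) * ε := by
    have hmin : min ε 1 ≤ ε := min_le_left _ _
    have h2θ : 0 < 2*θ - 1 := by linarith
    have h1 : Δt * (K₁ * (K₁ - ε) * θ^2) ≤ (2*θ - 1) * min ε 1 := (le_div_iff₀ hden).mp hΔt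
    nlinarith [mul_le_mul_of_nonneg_left hmin h2θ.le]
  set s : ℝ := (1+t)⁻¹ with hsdef
  have hs0 : 0 < s := by positivity
  have hs1 : s ≤ 1 := by
    rw [hsdef]
    rw [inv_le_one_iff₀]
    right; linarith
  set u : ℝ := ‖x‖ with hu
  set c : ℝ := ‖f x t‖ with hc
  have hu0 : 0 ≤ u := norm_nonneg _
  have hc0 : 0 ≤ c := norm_nonneg _
  -- bound on ‖F x t‖
  have hFle : ‖F x t‖ ≤ u + θ * Δt * c := by
    rw [hF]
    calc ‖x - (θ * Δt) • f x t‖ ≤ ‖x‖ + ‖(θ * Δt) • f x t‖ := norm_sub_le _ _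
    _ = u + θ * Δt * c := by
        rw [norm_smul, Real.norm_eq_abs, abs_of_nonneg (by positivity : (0:ℝ) ≤ θ * Δt)]
  have hFsq : ‖F x t‖ ^ 2 ≤ (u + θ * Δt * c) ^ 2 :=
    pow_le_pow_left₀ (norm_nonneg _) hFle 2
  -- key algebraic inequality
  have key : (K₁ - ε) * s * (u + θ * Δt * c) ^ 2 ≤ K₁ * s * u ^ 2 + (2*θ - 1) * Δt * c ^ 2 := by
    have hsc : s * (K₁ * (K₁ - ε) * θ^2 * Δt) ≤ (2*θ - 1) * ε := by
      calc s * (K₁ * (K₁ - ε) * θ^2 * Δt) ≤ 1 * (K₁ * (K₁ - ε) * θ^2 * Δt) := by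
            apply mul_le_mul_of_nonneg_right hs1 (by positivity)
      _ = K₁ * (K₁ - ε) * θ^2 * Δt := one_mul _
      _ ≤ (2*θ - 1) * ε := hΔt'
    nlinarith [sq_nonneg (ε * s * u - (K₁ - ε) * s * θ * Δt * c), sq_nonneg (u*c),
      mul_pos hε0 hs0, mul_nonneg (mul_nonneg hε0.le hs0.le) (sq_nonneg c),
      mul_le_mul_of_nonneg_right hsc (mul_nonneg (sq_nonneg c) hs0.le),
      mul_nonneg hu0 hc0, sq_nonneg (u - θ*Δt*c)]
  have hQ : (K₁ - ε) * s * ‖F x t‖ ^ 2 ≤ K₁ * s * u ^ 2 + (2*θ - 1) * Δt * c ^ 2 := by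
    calc (K₁ - ε) * s * ‖F x t‖ ^ 2 ≤ (K₁ - ε) * s * (u + θ * Δt * c) ^ 2 := by
          apply mul_le_mul_of_nonneg_left hFsq (by positivity)
    _ ≤ _ := key
  have hmain := hcond x t ht
  rw [← hsdef, ← hu] at hmain
  linarith
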